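/- arXiv:1007.1037 — 3 statements merged into one kernel-verified Lean document; each statement's English description precedes it below -/
import Mathlib

section
/- Let u be a unitary element of M = M_n(L) with entries u_{ij} ∈ L, and let ρ[U] be the n²×n² matrix associated to the operational partition U induced by u. Then N and uNu* are mutually orthogonal if and only if n²·ρ[U] is the n²×n² identity matrix. -/
open Matrix ComplexOrder

/-- The normalized trace `τ_M = Tr/n ⊗ τ_L` on `M = M_n(L)`:
`τ_M(x) = (1/n) Σ_i τ_L(x_{ii})`. -/
noncomputable def tauM (n : ℕ) {L : Type*} [Ring L] [Algebra ℂ L]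
    (τ : L →ₗ[ℂ] ℂ) (x : Matrix (Fin n) (Fin n) L) : ℂ :=
  (n : ℂ)⁻¹ * ∑ i, τ (x i i)

/-- The embedding `a ↦ a ⊗ 1_L` of `M_n(ℂ)` into `M_n(L)`. -/
noncomputable def incl (n : ℕ) {L : Type*} [Ring L] [Algebra ℂ L]
    (a : Matrix (Fin n) (Fin n) ℂ) : Matrix (Fin n) (Fin n) L :=
  a.map (algebraMap ℂ L)

/-- `N = M_n(ℂ) ⊗ 1_L` and `uNu*` are mutually orthogonal:
`τ_M(ab) = τ_M(a)τ_M(b)` for all `a ∈ N`, `b ∈ uNu*`. -/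
def MutuallyOrthogonalConj (n : ℕ) {L : Type*} [Ring L] [StarRing L] [Algebra ℂ L]
    (τ : L →ₗ[ℂ] ℂ) (u : Matrix (Fin n) (Fin n) L) : Prop :=
  ∀ a b : Matrix (Fin n) (Fin n) ℂ,
    tauM n τ (incl n a * (u * incl n b * star u)) =
      tauM n τ (incl n a) * tauM n τ (u * incl n b * star u)

/-- The `n²×n²` density matrix `ρ[U]` associated to the operational partition
`U = (u_{ij}/√n)_{i,j}` induced by `u`:
its `((i,j),(k,l))` entry is `(1/n)·τ_L(u_{kl}* u_{ij})`. -/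
noncomputable def rhoU (n : ℕ) {L : Type*} [Ring L] [StarRing L] [Algebra ℂ L]
    (τ : L →ₗ[ℂ] ℂ) (u : Matrix (Fin n) (Fin n) L) :
    Matrix (Fin n × Fin n) (Fin n × Fin n) ℂ :=
  Matrix.of fun p q : Fin n × Fin n =>
    (n : ℂ)⁻¹ * τ (star (u q.1 q.2) * u p.1 p.2)

section aux
set_option linter.unusedSectionVars false
variable {n : ℕ} {L : Type*} [Ring L] [StarRing L] [Algebra ℂ L]
variable (τ : L →ₗ[ℂ] ℂ)

lemma tauM_comm (hτtr : ∀ x y : L, τ (x * y) = τ (y * x))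
    (x y : Matrix (Fin n) (Fin n) L) :
    tauM n τ (x * y) = tauM n τ (y * x) := by
  unfold tauM
  congr 1
  simp only [Matrix.mul_apply, map_sum]
  rw [Finset.sum_comm]
  exact Finset.sum_congr rfl fun j _ => Finset.sum_congr rfl fun i _ => hτtr _ _

lemma tauM_incl (hτ1 : τ 1 = 1) (a : Matrix (Fin n) (Fin n) ℂ) :
    tauM n τ (incl n a) = (n : ℂ)⁻¹ * ∑ i, a i i := by
  unfold tauM incl
  simp [Matrix.map_apply, Algebra.algebraMap_eq_smul_one, hτ1]

lemma tauM_conj (hτtr : ∀ x y : L, τ (x * y) = τ (y * x))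
    (u : Matrix (Fin n) (Fin n) L) (hu : star u * u = 1)
    (x : Matrix (Fin n) (Fin n) L) :
    tauM n τ (u * x * star u) = tauM n τ x := by
  rw [tauM_comm τ hτtr (u * x) (star u), ← mul_assoc, hu, one_mul]

lemma expand_lhs (hτtr : ∀ x y : L, τ (x * y) = τ (y * x))
    (u : Matrix (Fin n) (Fin n) L) (a b : Matrix (Fin n) (Fin n) ℂ) :
    tauM n τ (incl n a * (u * incl n b * star u)) =
      (n : ℂ)⁻¹ * ∑ i, ∑ j, ∑ k, ∑ l,
        a i j * b k l * τ (star (u i l) * u j k) := by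
  unfold tauM incl
  congr 1
  refine Finset.sum_congr rfl fun i _ => ?_
  have h : (a.map (algebraMap ℂ L) * (u * b.map (algebraMap ℂ L) * star u)) i i
      = ∑ j, ∑ k, ∑ l, (a i j * b k l) • (u j k * star (u i l)) := by
    simp only [Matrix.mul_apply, Matrix.map_apply, Matrix.star_apply,
      Finset.mul_sum, Finset.sum_mul]
    refine Finset.sum_congr rfl fun j _ => ?_
    rw [Finset.sum_comm]
    refine Finset.sum_congr rfl fun k _ => Finset.sum_congr rfl fun l _ => ?_
    rw [Algebra.algebraMap_eq_smul_one, Algebra.algebraMap_eq_smul_one]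
    simp only [smul_mul_assoc, mul_smul_comm, one_mul, mul_one, smul_smul]
    rw [mul_comm (b k l) (a i j)]
  rw [h]
  simp only [map_sum, LinearMap.map_smul, smul_eq_mul]
  exact Finset.sum_congr rfl fun j _ => Finset.sum_congr rfl fun k _ =>
    Finset.sum_congr rfl fun l _ => by rw [hτtr]

end aux

/-- For a unitary `u ∈ M = M_n(L)`, the subalgebras `N = M_n(ℂ) ⊗ 1_L`
and `uNu*` are mutually orthogonal if and only if `n²·ρ[U]` is the `n²×n²` identity
matrix. -/
theorem mutually_orthogonal_iff_rho_scalar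
    {n : ℕ} {L : Type*} [Ring L] [StarRing L] [Algebra ℂ L] [StarModule ℂ L]
    [FiniteDimensional ℂ L]
    (τ : L →ₗ[ℂ] ℂ)
    (hτ1 : τ 1 = 1)
    (hτtr : ∀ x y : L, τ (x * y) = τ (y * x))
    (hτstar : ∀ x : L, τ (star x) = starRingEnd ℂ (τ x))
    (hτpos : ∀ x : L, 0 ≤ τ (star x * x))
    (hτfaithful : ∀ x : L, τ (star x * x) = 0 → x = 0)
    (u : Matrix (Fin n) (Fin n) L)
    (hu : star u * u = 1) (hu' : u * star u = 1) :
    MutuallyOrthogonalConj n τ u ↔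
      ((n : ℂ) ^ 2) • rhoU n τ u = (1 : Matrix (Fin n × Fin n) (Fin n × Fin n) ℂ) := by
  rcases Nat.eq_zero_or_pos n with hn | hn
  · subst hn
    constructor
    · intro _
      ext p q
      exact p.1.elim0
    · intro _ a b
      simp [tauM]
  · have hn0 : (n : ℂ) ≠ 0 := by exact_mod_cast hn.ne'
    constructor
    · intro hOrth
      ext ⟨i, j⟩ ⟨k, l⟩
      have h := hOrth (Matrix.of fun i' j' => if i' = k ∧ j' = i then 1 else 0)
        (Matrix.of fun i' j' => if i' = j ∧ j' = l then 1 else 0)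
      rw [expand_lhs τ hτtr, tauM_conj τ hτtr u hu, tauM_incl τ hτ1, tauM_incl τ hτ1] at h
      simp only [Matrix.of_apply, ite_and, ite_mul, one_mul, zero_mul, mul_ite, mul_zero,
        mul_one, Finset.sum_ite_irrel, Finset.sum_ite_eq', Finset.sum_ite_eq,
        Finset.mem_univ, if_true, Finset.sum_const_zero] at h
      simp only [Matrix.smul_apply, rhoU, Matrix.of_apply, Matrix.one_apply, smul_eq_mul,
        Prod.mk.injEq]
      rw [h]
      by_cases h1 : i = k
      · by_cases h2 : j = l
        · subst h1; subst h2
          simp only [if_pos rfl, and_self, if_true]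
          rw [pow_two]
          field_simp
        · simp [h2]
      · simp [Ne.symm h1, h1]
    · intro hmat a b
      have hkey : ∀ i j k l : Fin n, τ (star (u i l) * u j k)
          = (n : ℂ)⁻¹ * ((if j = i then (1:ℂ) else 0) * (if k = l then (1:ℂ) else 0)) := by
        intro i j k l
        have h := congrFun (congrFun hmat (j, k)) (i, l)
        simp only [Matrix.smul_apply, rhoU, Matrix.of_apply, Matrix.one_apply, smul_eq_mul,
          Prod.mk.injEq] at h
        have hn2 : (n : ℂ) ^ 2 * (n : ℂ)⁻¹ = n := by field_simp [pow_two]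
        rw [← mul_assoc, hn2] at h
        have h' : τ (star (u i l) * u j k)
            = (n : ℂ)⁻¹ * (if j = i ∧ k = l then (1:ℂ) else 0) := by
          field_simp [← h]
          rw [mul_comm]; exact h
        rw [h']
        by_cases h1 : j = i <;> by_cases h2 : k = l <;> simp [h1, h2]
      rw [expand_lhs τ hτtr, tauM_conj τ hτtr u hu, tauM_incl τ hτ1, tauM_incl τ hτ1]
      have hsum : (∑ i, ∑ j, ∑ k, ∑ l, a i j * b k l * τ (star (u i l) * u j k))
          = (n : ℂ)⁻¹ * ((∑ i, a i i) * (∑ k, b k k)) := by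
        simp only [hkey]
        simp only [mul_ite, mul_zero, mul_one, ite_mul, zero_mul, one_mul,
          Finset.sum_ite_irrel, Finset.sum_const_zero, Finset.sum_ite_eq,
          Finset.sum_ite_eq', Finset.mem_univ, if_true]
        rw [Finset.sum_mul_sum, Finset.mul_sum]
        refine Finset.sum_congr rfl fun x _ => ?_
        rw [Finset.mul_sum]
        exact Finset.sum_congr rfl fun y _ => by ring
      rw [hsum]
      ring
end

section
/- Let u be a unitary element of M = M_n(L) with entries u_{ij} ∈ L, and let ρ[U] be the n²×n² matrix associated to the operational partition U induced by u. Then N and uNu* are mutually orthogonal if and only if the von Neumann entropy S(ρ[U]) equals 2 log n, the logarithm of the dimension of N. -/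
open Matrix ComplexOrder

/-- The von Neumann entropy `S(ρ) = Σ_i η(λ_i)` of a Hermitian matrix `ρ`, where
`λ_i` are the eigenvalues of `ρ` (with multiplicity) and `η(t) = -t log t`. -/
noncomputable def vnEntropy {k : Type*} [Fintype k] [DecidableEq k]
    (ρ : Matrix k k ℂ) (hρ : ρ.IsHermitian) : ℝ :=
  ∑ i, Real.negMulLog (hρ.eigenvalues i)

/-! ### Auxiliary real-analysis lemmas: the tangent-line trick for `negMulLog` -/

lemma aux_negMulLog_le {t a : ℝ} (ht : 0 ≤ t) (ha : 0 < a) :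
    Real.negMulLog t ≤ a - t - t * Real.log a := by
  rcases ht.eq_or_lt with h | h
  · simp [← h, Real.negMulLog, ha.le]
  · have hlog := Real.log_le_sub_one_of_pos (div_pos ha h)
    rw [Real.log_div ha.ne' h.ne'] at hlog
    have h2 : t * (a / t - 1) = a - t := by field_simp
    have h3 := mul_le_mul_of_nonneg_left hlog h.le
    rw [Real.negMulLog]
    nlinarith [h3, h2]

lemma aux_negMulLog_eq {t a : ℝ} (ht : 0 ≤ t) (ha : 0 < a)
    (heq : Real.negMulLog t = a - t - t * Real.log a) : t = a := by
  by_contra hne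
  rcases ht.eq_or_lt with h | h
  · rw [← h] at heq
    simp [Real.negMulLog] at heq
    exact ha.ne' heq.symm
  · have hne1 : a / t ≠ 1 := by
      intro h1
      rw [div_eq_one_iff_eq h.ne'] at h1
      exact hne h1.symm
    have hlog := Real.log_lt_sub_one_of_pos (div_pos ha h) hne1
    rw [Real.log_div ha.ne' h.ne'] at hlog
    have h2 : t * (a / t - 1) = a - t := by field_simp
    have h3 := mul_lt_mul_of_pos_left hlog h
    rw [Real.negMulLog] at heq
    nlinarith [h3, h2]

/-- A probability vector has entropy `log (card ι)` iff it is uniform. -/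
lemma aux_entropy_iff {ι : Type*} [Fintype ι] [Nonempty ι] (lam : ι → ℝ)
    (h0 : ∀ i, 0 ≤ lam i) (h1 : ∑ i, lam i = 1) :
    (∑ i, Real.negMulLog (lam i)) = Real.log (Fintype.card ι) ↔
      ∀ i, lam i = (Fintype.card ι : ℝ)⁻¹ := by
  set m : ℝ := (Fintype.card ι : ℝ) with hm_def
  have hm : 0 < m := by
    simp only [hm_def]
    exact_mod_cast Fintype.card_pos
  have ha : 0 < m⁻¹ := inv_pos.mpr hm
  have hsumg : ∑ i : ι, (m⁻¹ - lam i - lam i * Real.log m⁻¹) = Real.log m := by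
    rw [Finset.sum_sub_distrib, Finset.sum_sub_distrib, ← Finset.sum_mul, h1,
      Finset.sum_const, Real.log_inv]
    rw [nsmul_eq_mul, Finset.card_univ, ← hm_def, mul_inv_cancel₀ hm.ne']
    ring
  constructor
  · intro hE i
    have hle : ∀ j ∈ Finset.univ, Real.negMulLog (lam j) ≤ m⁻¹ - lam j - lam j * Real.log m⁻¹ :=
      fun j _ => aux_negMulLog_le (h0 j) ha
    have := (Finset.sum_eq_sum_iff_of_le hle).1 (by rw [hE, hsumg]) i (Finset.mem_univ i)
    exact aux_negMulLog_eq (h0 i) ha this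
  · intro h
    have : ∀ i : ι, Real.negMulLog (lam i) = m⁻¹ * Real.log m := by
      intro i
      rw [h i, Real.negMulLog, Real.log_inv]
      ring
    rw [Finset.sum_congr rfl (fun i _ => this i), Finset.sum_const]
    rw [nsmul_eq_mul, Finset.card_univ, ← hm_def, ← mul_assoc, mul_inv_cancel₀ hm.ne', one_mul]

/-! ### Auxiliary spectral lemmas -/

lemma aux_sum_eigs {k : Type*} [Fintype k] [DecidableEq k] {ρ : Matrix k k ℂ}
    (hρ : ρ.IsHermitian) : (∑ i, (hρ.eigenvalues i : ℂ)) = ρ.trace := by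
  conv_rhs => rw [hρ.spectral_theorem]
  rw [Unitary.conjStarAlgAut_apply, Matrix.trace_mul_comm, ← mul_assoc,
    (Matrix.mem_unitaryGroup_iff').mp (hρ.eigenvectorUnitary).2, one_mul, Matrix.trace_diagonal]
  rfl

lemma aux_eigs_const_iff {k : Type*} [Fintype k] [DecidableEq k] {ρ : Matrix k k ℂ}
    (hρ : ρ.IsHermitian) (c : ℝ) :
    ρ = (c : ℂ) • 1 ↔ ∀ i, hρ.eigenvalues i = c := by
  constructor
  · intro h i
    have hst : star (hρ.eigenvectorUnitary : Matrix k k ℂ) * ρ *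
        (hρ.eigenvectorUnitary : Matrix k k ℂ) = Matrix.diagonal (RCLike.ofReal ∘ hρ.eigenvalues) :=
      by rw [← hρ.conjStarAlgAut_star_eigenvectorUnitary, Unitary.conjStarAlgAut_star_apply]
    have hc := congrArg (fun X => star (hρ.eigenvectorUnitary : Matrix k k ℂ) * X *
      (hρ.eigenvectorUnitary : Matrix k k ℂ)) h
    rw [hc] at hst
    rw [Matrix.mul_smul, Matrix.smul_mul, mul_one,
      (Matrix.mem_unitaryGroup_iff').mp (hρ.eigenvectorUnitary).2] at hst
    have := congrFun (congrFun hst i) i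
    simp [Matrix.diagonal_apply_eq, Matrix.smul_apply, Matrix.one_apply_eq] at this
    exact_mod_cast this.symm
  · intro h
    have hd : Matrix.diagonal (RCLike.ofReal ∘ hρ.eigenvalues) = (c : ℂ) • (1 : Matrix k k ℂ) := by
      ext i j
      by_cases hij : i = j
      · subst hij; simp [h i]
      · simp [Matrix.diagonal_apply_ne _ hij, Matrix.one_apply_ne hij]
    rw [hρ.spectral_theorem, Unitary.conjStarAlgAut_apply, hd, Matrix.mul_smul, Matrix.smul_mul, mul_one,
      (Matrix.mem_unitaryGroup_iff).mp (hρ.eigenvectorUnitary).2]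

/-! ### Computation of the normalized trace on products -/

lemma aux_tau_algebraMap {L : Type*} [Ring L] [Algebra ℂ L]
    (τ : L →ₗ[ℂ] ℂ) (hτ1 : τ 1 = 1) (c : ℂ) :
    τ (algebraMap ℂ L c) = c := by
  rw [Algebra.algebraMap_eq_smul_one, τ.map_smul, hτ1, smul_eq_mul, mul_one]

lemma aux_tauM_incl {n : ℕ} {L : Type*} [Ring L] [Algebra ℂ L]
    (τ : L →ₗ[ℂ] ℂ) (hτ1 : τ 1 = 1) (a : Matrix (Fin n) (Fin n) ℂ) :
    tauM n τ (incl n a) = (n : ℂ)⁻¹ * ∑ s, a s s := by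
  unfold tauM incl
  simp [Matrix.map_apply, aux_tau_algebraMap τ hτ1]

lemma aux_entry_w {n : ℕ} {L : Type*} [Ring L] [StarRing L] [Algebra ℂ L]
    (τ : L →ₗ[ℂ] ℂ) (hτtr : ∀ x y : L, τ (x * y) = τ (y * x))
    (u : Matrix (Fin n) (Fin n) L) (b : Matrix (Fin n) (Fin n) ℂ) (t s : Fin n) :
    τ ((u * incl n b * star u : Matrix (Fin n) (Fin n) L) t s) =
      ∑ p, ∑ q, b p q * τ (star (u s q) * u t p) := by
  have h1 : (u * incl n b * star u : Matrix (Fin n) (Fin n) L) t s =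
      ∑ q, ∑ p, (b p q) • (u t p * star (u s q)) := by
    simp only [Matrix.mul_apply, Matrix.star_apply, Finset.sum_mul, incl, Matrix.map_apply]
    refine Finset.sum_congr rfl fun q _ => Finset.sum_congr rfl fun p _ => ?_
    rw [Algebra.algebraMap_eq_smul_one, mul_smul_comm, mul_one, smul_mul_assoc]
  rw [h1, map_sum, Finset.sum_comm]
  refine Finset.sum_congr rfl fun p _ => ?_
  rw [map_sum]
  refine Finset.sum_congr rfl fun q _ => ?_
  rw [τ.map_smul, smul_eq_mul, hτtr]

lemma aux_tauM_w {n : ℕ} {L : Type*} [Ring L] [StarRing L] [Algebra ℂ L]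
    (τ : L →ₗ[ℂ] ℂ) (hτtr : ∀ x y : L, τ (x * y) = τ (y * x))
    (u : Matrix (Fin n) (Fin n) L) (b : Matrix (Fin n) (Fin n) ℂ) :
    tauM n τ (u * incl n b * star u) =
      (n : ℂ)⁻¹ * ∑ s, ∑ p, ∑ q, b p q * τ (star (u s q) * u s p) := by
  unfold tauM
  congr 1
  exact Finset.sum_congr rfl fun s _ => aux_entry_w τ hτtr u b s s

lemma aux_tauM_aw {n : ℕ} {L : Type*} [Ring L] [StarRing L] [Algebra ℂ L]
    (τ : L →ₗ[ℂ] ℂ) (hτtr : ∀ x y : L, τ (x * y) = τ (y * x))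
    (u : Matrix (Fin n) (Fin n) L) (a b : Matrix (Fin n) (Fin n) ℂ) :
    tauM n τ (incl n a * (u * incl n b * star u)) =
      (n : ℂ)⁻¹ * ∑ s, ∑ t, ∑ p, ∑ q, a s t * (b p q * τ (star (u s q) * u t p)) := by
  unfold tauM
  congr 1
  refine Finset.sum_congr rfl fun s _ => ?_
  have h1 : (incl n a * (u * incl n b * star u) : Matrix (Fin n) (Fin n) L) s s =
      ∑ t, a s t • (u * incl n b * star u : Matrix (Fin n) (Fin n) L) t s := by
    simp only [Matrix.mul_apply, incl, Matrix.map_apply]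
    refine Finset.sum_congr rfl fun t _ => ?_
    rw [Algebra.algebraMap_eq_smul_one, smul_mul_assoc, one_mul]
  rw [h1, map_sum]
  refine Finset.sum_congr rfl fun t _ => ?_
  rw [τ.map_smul, smul_eq_mul, aux_entry_w τ hτtr u b t s, Finset.mul_sum]
  exact Finset.sum_congr rfl fun p _ => by rw [Finset.mul_sum]

/-- The "flatness" condition: all pair correlations of entries of `u` are those of a
"magic"-type unitary. -/
def Flat (n : ℕ) {L : Type*} [Ring L] [StarRing L] [Algebra ℂ L]
    (τ : L →ₗ[ℂ] ℂ) (u : Matrix (Fin n) (Fin n) L) : Prop :=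
  ∀ i j k l : Fin n, τ (star (u i j) * u k l) =
    if i = k ∧ j = l then (n : ℂ)⁻¹ else 0

lemma aux_col {n : ℕ} {L : Type*} [Ring L] [StarRing L] [Algebra ℂ L]
    (τ : L →ₗ[ℂ] ℂ) (hτ1 : τ 1 = 1) (u : Matrix (Fin n) (Fin n) L)
    (hu : star u * u = 1) (j l : Fin n) :
    ∑ s, τ (star (u s j) * u s l) = if j = l then 1 else 0 := by
  rw [← map_sum]
  have h : ∑ s, star (u s j) * u s l = (1 : Matrix (Fin n) (Fin n) L) j l := by
    rw [← hu]; simp [Matrix.mul_apply, Matrix.star_apply]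
  rw [h, Matrix.one_apply]
  split <;> simp [hτ1]

lemma flat_iff_orth {n : ℕ} {L : Type*} [Ring L] [StarRing L] [Algebra ℂ L]
    (hn : (n : ℂ) ≠ 0) (τ : L →ₗ[ℂ] ℂ) (hτ1 : τ 1 = 1)
    (hτtr : ∀ x y : L, τ (x * y) = τ (y * x))
    (u : Matrix (Fin n) (Fin n) L) (hu : star u * u = 1) :
    Flat n τ u ↔ MutuallyOrthogonalConj n τ u := by
  constructor
  · intro hflat a b
    have hflat' : ∀ i j k l : Fin n, τ (star (u i j) * u k l) =
        if i = k ∧ j = l then (n : ℂ)⁻¹ else 0 := hflat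
    rw [aux_tauM_aw τ hτtr, aux_tauM_w τ hτtr, aux_tauM_incl τ hτ1]
    simp only [hflat']
    simp only [mul_ite, mul_zero, mul_one, ite_and, eq_self_iff_true, if_true,
      Finset.sum_ite_eq', Finset.mem_univ, Finset.sum_ite_eq]
    have hL : ∀ x x1 : Fin n,
        (∑ x2 : Fin n, ∑ x3 : Fin n,
          if x = x1 then if x3 = x2 then a x x1 * (b x2 x3 * (n:ℂ)⁻¹) else 0 else 0)
        = if x = x1 then (∑ x2 : Fin n, a x x1 * b x2 x2) * (n:ℂ)⁻¹ else 0 := by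
      intro x x1
      split_ifs with hx
      · simp [Finset.sum_ite_eq', Finset.sum_mul, mul_assoc]
      · simp
    rw [Finset.sum_congr rfl fun x (_ : x ∈ Finset.univ) =>
      Finset.sum_congr rfl fun x1 (_ : x1 ∈ Finset.univ) => hL x x1]
    simp only [Finset.sum_ite_eq, Finset.mem_univ, if_true]
    simp only [Finset.sum_const, Finset.card_univ, Fintype.card_fin, nsmul_eq_mul,
      ← Finset.sum_mul, ← Finset.sum_mul_sum]
    field_simp
  · intro horth i j k l
    have h := horth (Matrix.of fun s t => (if s = i then (1:ℂ) else 0) * (if t = k then 1 else 0))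
      (Matrix.of fun p q => (if p = l then (1:ℂ) else 0) * (if q = j then 1 else 0))
    rw [aux_tauM_aw τ hτtr, aux_tauM_w τ hτtr, aux_tauM_incl τ hτ1] at h
    simp only [Matrix.of_apply, ite_mul, mul_ite, one_mul, zero_mul, mul_zero, mul_one,
      Finset.sum_ite_eq', Finset.mem_univ, if_true] at h
    rw [aux_col τ hτ1 u hu j l] at h
    have hgoal : (n:ℂ)⁻¹ * τ (star (u i j) * u k l) =
        (n:ℂ)⁻¹ * (if i = k ∧ j = l then (n:ℂ)⁻¹ else 0) := by
      rw [h]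
      by_cases hik : i = k <;> by_cases hjl : j = l <;> simp [hik, hjl, eq_comm]
    exact mul_left_cancel₀ (inv_ne_zero hn) hgoal

/-! ### Properties of `ρ[U]` -/

lemma aux_flat_iff_scalar {n : ℕ} {L : Type*} [Ring L] [StarRing L] [Algebra ℂ L]
    (hn : (n : ℂ) ≠ 0) (τ : L →ₗ[ℂ] ℂ)
    (u : Matrix (Fin n) (Fin n) L) :
    Flat n τ u ↔ rhoU n τ u = ((n : ℂ) ^ 2)⁻¹ • 1 := by
  constructor
  · intro hflat
    ext ⟨i, j⟩ ⟨k, l⟩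
    show (n:ℂ)⁻¹ * τ (star (u k l) * u i j) = _
    rw [hflat k l i j]
    by_cases hc : ((i, j) : Fin n × Fin n) = (k, l)
    · rw [Prod.mk.injEq] at hc
      obtain ⟨rfl, rfl⟩ := hc
      simp only [and_self, if_true, Matrix.smul_apply, Matrix.one_apply_eq, smul_eq_mul]
      ring
    · rw [if_neg (by rintro ⟨rfl, rfl⟩; exact hc rfl), Matrix.smul_apply,
        Matrix.one_apply_ne (by exact fun h => hc h), smul_zero, mul_zero]
  · intro h i j k l
    have := congrFun (congrFun h (k, l)) (i, j)
    simp only [rhoU, Matrix.of_apply, Matrix.smul_apply, Matrix.one_apply, smul_eq_mul,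
      Prod.mk.injEq] at this
    have h2 : (n:ℂ)⁻¹ * τ (star (u i j) * u k l) =
        (n:ℂ)⁻¹ * (if i = k ∧ j = l then (n:ℂ)⁻¹ else 0) := by
      rw [this]
      by_cases h1 : i = k <;> by_cases h3 : j = l <;>
        simp [h1, h3, eq_comm] <;> field_simp <;> ring
    exact mul_left_cancel₀ (inv_ne_zero hn) h2

lemma aux_rho_psd {n : ℕ} {L : Type*} [Ring L] [StarRing L] [Algebra ℂ L] [StarModule ℂ L]
    (τ : L →ₗ[ℂ] ℂ) (hτpos : ∀ x : L, 0 ≤ τ (star x * x))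
    (u : Matrix (Fin n) (Fin n) L) (hherm : (rhoU n τ u).IsHermitian) :
    (rhoU n τ u).PosSemidef := by
  refine Matrix.PosSemidef.of_dotProduct_mulVec_nonneg hherm fun x => ?_
  set y : L := ∑ r : Fin n × Fin n, star (x r) • u r.1 r.2 with hy
  have h1 : star y * y = ∑ r : Fin n × Fin n, ∑ r' : Fin n × Fin n,
      (x r * star (x r')) • (star (u r.1 r.2) * u r'.1 r'.2) := by
    rw [hy, star_sum, Finset.sum_mul]
    refine Finset.sum_congr rfl fun r _ => ?_
    rw [Finset.mul_sum]
    refine Finset.sum_congr rfl fun r' _ => ?_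
    rw [star_smul, star_star, smul_mul_smul_comm]
  have h2 : τ (star y * y) = ∑ r : Fin n × Fin n, ∑ r' : Fin n × Fin n,
      x r * star (x r') * τ (star (u r.1 r.2) * u r'.1 r'.2) := by
    rw [h1, map_sum]
    exact Finset.sum_congr rfl fun r _ => by
      rw [map_sum]
      exact Finset.sum_congr rfl fun r' _ => by rw [τ.map_smul, smul_eq_mul]
  have key : dotProduct (star x) ((rhoU n τ u) *ᵥ x) = (n : ℂ)⁻¹ * τ (star y * y) := by
    rw [h2, Finset.mul_sum]
    simp only [dotProduct, Matrix.mulVec, Pi.star_apply, rhoU, Matrix.of_apply,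
      dotProduct, Finset.mul_sum]
    rw [Finset.sum_comm]
    refine Finset.sum_congr rfl fun q _ => ?_
    refine Finset.sum_congr rfl fun p _ => ?_
    ring
  rw [key]
  have hninv : (0 : ℂ) ≤ (n : ℂ)⁻¹ := by
    have : ((n : ℝ)⁻¹ : ℂ) = (n : ℂ)⁻¹ := by push_cast; ring
    rw [← this]
    exact_mod_cast Complex.zero_le_real.mpr (by positivity)
  exact mul_nonneg hninv (hτpos y)

lemma aux_rho_trace {n : ℕ} {L : Type*} [Ring L] [StarRing L] [Algebra ℂ L]
    (hn : (n : ℂ) ≠ 0) (τ : L →ₗ[ℂ] ℂ) (hτ1 : τ 1 = 1)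
    (u : Matrix (Fin n) (Fin n) L) (hu : star u * u = 1) :
    (rhoU n τ u).trace = 1 := by
  have h : ∑ p : Fin n × Fin n, star (u p.1 p.2) * u p.1 p.2 = (n : ℕ) • (1 : L) := by
    rw [Fintype.sum_prod_type, Finset.sum_comm]
    calc ∑ j : Fin n, ∑ i : Fin n, star (u i j) * u i j = ∑ _j : Fin n, (1 : L) := by
          refine Finset.sum_congr rfl fun j _ => ?_
          have := congrFun (congrFun hu j) j
          simpa [Matrix.mul_apply, Matrix.star_apply, Matrix.one_apply] using this
      _ = (n : ℕ) • (1 : L) := by simp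
  have : (rhoU n τ u).trace = (n : ℂ)⁻¹ * τ (∑ p : Fin n × Fin n, star (u p.1 p.2) * u p.1 p.2) := by
    rw [map_sum, Finset.mul_sum]
    simp [Matrix.trace, Matrix.diag, rhoU]
  rw [this, h, map_nsmul, hτ1]
  simp only [nsmul_eq_mul, mul_one]
  exact inv_mul_cancel₀ hn

/-- For a unitary `u ∈ M = M_n(L)`, the subalgebras `N = M_n(ℂ) ⊗ 1_L`
and `uNu*` are mutually orthogonal if and only if the von Neumann entropy of `ρ[U]`
equals `2 log n`, the logarithm of the dimension of `N`. -/
theorem mutually_orthogonal_iff_entropy_eq_two_log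
    {n : ℕ} {L : Type*} [Ring L] [StarRing L] [Algebra ℂ L] [StarModule ℂ L]
    [FiniteDimensional ℂ L]
    (τ : L →ₗ[ℂ] ℂ)
    (hτ1 : τ 1 = 1)
    (hτtr : ∀ x y : L, τ (x * y) = τ (y * x))
    (hτstar : ∀ x : L, τ (star x) = starRingEnd ℂ (τ x))
    (hτpos : ∀ x : L, 0 ≤ τ (star x * x))
    (hτfaithful : ∀ x : L, τ (star x * x) = 0 → x = 0)
    (u : Matrix (Fin n) (Fin n) L)
    (hu : star u * u = 1) (hu' : u * star u = 1)
    (hherm : (rhoU n τ u).IsHermitian) :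
    MutuallyOrthogonalConj n τ u ↔
      vnEntropy (rhoU n τ u) hherm = 2 * Real.log n := by
  by_cases hn0 : n = 0
  · subst hn0
    constructor
    · intro _
      simp [vnEntropy]
    · intro _ a b
      simp [tauM]
  · have hn : (n : ℂ) ≠ 0 := Nat.cast_ne_zero.mpr hn0
    have hnpos : 0 < n := Nat.pos_of_ne_zero hn0
    haveI : Nonempty (Fin n × Fin n) := ⟨(⟨0, hnpos⟩, ⟨0, hnpos⟩)⟩
    have htr := aux_rho_trace hn τ hτ1 u hu
    have hsum : ∑ i, hherm.eigenvalues i = 1 := by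
      have h := aux_sum_eigs hherm
      rw [htr] at h
      exact_mod_cast h
    have hpsd := aux_rho_psd τ hτpos u hherm
    have hnonneg : ∀ i, 0 ≤ hherm.eigenvalues i := fun i => hpsd.eigenvalues_nonneg i
    have hcard : Fintype.card (Fin n × Fin n) = n * n := by simp
    have hlog : Real.log (Fintype.card (Fin n × Fin n) : ℝ) = 2 * Real.log n := by
      rw [hcard]
      push_cast
      rw [Real.log_mul (by exact_mod_cast hn0) (by exact_mod_cast hn0)]
      ring
    have hcast : ∀ i, (hherm.eigenvalues i = (Fintype.card (Fin n × Fin n) : ℝ)⁻¹ ↔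
        hherm.eigenvalues i = ((n : ℝ) ^ 2)⁻¹) := by
      intro i
      rw [hcard]
      push_cast
      rw [sq]
    have hscalar_cast : ((((n : ℝ) ^ 2)⁻¹ : ℝ) : ℂ) = ((n : ℂ) ^ 2)⁻¹ := by push_cast; ring
    constructor
    · intro horth
      have hflat := (flat_iff_orth hn τ hτ1 hτtr u hu).mpr horth
      have hscalar := (aux_flat_iff_scalar hn τ u).mp hflat
      have heig : ∀ i, hherm.eigenvalues i = (Fintype.card (Fin n × Fin n) : ℝ)⁻¹ := by
        have h := (aux_eigs_const_iff hherm (((n : ℝ) ^ 2)⁻¹)).mp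
          (by rw [hscalar, hscalar_cast])
        intro i
        exact (hcast i).mpr (h i)
      calc vnEntropy (rhoU n τ u) hherm
          = Real.log (Fintype.card (Fin n × Fin n) : ℝ) :=
            (aux_entropy_iff hherm.eigenvalues hnonneg hsum).mpr heig
        _ = 2 * Real.log n := hlog
    · intro hent
      have heig := (aux_entropy_iff hherm.eigenvalues hnonneg hsum).mp
        (by rw [hlog]; exact hent)
      have hscalar : rhoU n τ u = ((n : ℂ) ^ 2)⁻¹ • 1 := by
        rw [← hscalar_cast]
        exact (aux_eigs_const_iff hherm (((n : ℝ) ^ 2)⁻¹)).mpr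
          (fun i => (hcast i).mp (heig i))
      exact (flat_iff_orth hn τ hτ1 hτtr u hu).mp ((aux_flat_iff_scalar hn τ u).mpr hscalar)
end

section
/- Identify M_{nm}(ℂ) with M_n(ℂ) ⊗ M_m(ℂ), let A = M_n(ℂ) ⊗ 1 and let u be a unitary in M_{nm}(ℂ), with B = uAu*. Write u = Σ_{i,j=1}^{n} e_{ij} ⊗ u_{ij} with blocks u_{ij} ∈ M_m(ℂ). Then A and B are mutually orthogonal (with respect to the normalized trace τ = Tr/(nm)) if and only if Tr(u_{ij}* u_{kl}) = δ_{ik} δ_{jl} (m/n) for all i, j, k, l = 1, …, n, where Tr is the unnormalized trace on M_m(ℂ). -/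
open Matrix

noncomputable def tauNM (n m : ℕ)
    (x : Matrix (Fin n) (Fin n) (Matrix (Fin m) (Fin m) ℂ)) : ℂ :=
  ((n * m : ℕ) : ℂ)⁻¹ * ∑ i, (x i i).trace

noncomputable def inclA (n m : ℕ) (a : Matrix (Fin n) (Fin n) ℂ) :
    Matrix (Fin n) (Fin n) (Matrix (Fin m) (Fin m) ℂ) :=
  a.map (algebraMap ℂ (Matrix (Fin m) (Fin m) ℂ))

lemma tau_mul_comm {n m : ℕ} (x y : Matrix (Fin n) (Fin n) (Matrix (Fin m) (Fin m) ℂ)) :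
    tauNM n m (x * y) = tauNM n m (y * x) := by
  unfold tauNM
  congr 1
  simp only [Matrix.mul_apply, Matrix.trace_sum]
  rw [Finset.sum_comm]
  exact Finset.sum_congr rfl fun p _ => Finset.sum_congr rfl fun i _ =>
    Matrix.trace_mul_comm _ _

lemma tau_inclA {n m : ℕ} (a : Matrix (Fin n) (Fin n) ℂ) :
    tauNM n m (inclA n m a) = ((n * m : ℕ) : ℂ)⁻¹ * ((m : ℂ) * ∑ i, a i i) := by
  unfold tauNM inclA
  congr 1
  rw [Finset.mul_sum]
  refine Finset.sum_congr rfl fun i _ => ?_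
  rw [Matrix.map_apply, Algebra.algebraMap_eq_smul_one, Matrix.trace_smul,
    Matrix.trace_one]
  simp [mul_comm]

lemma tau_key {n m : ℕ} (u : Matrix (Fin n) (Fin n) (Matrix (Fin m) (Fin m) ℂ))
    (a b : Matrix (Fin n) (Fin n) ℂ) :
    tauNM n m (inclA n m a * (u * inclA n m b * star u)) =
      ((n * m : ℕ) : ℂ)⁻¹ *
        ∑ i, ∑ p, ∑ k, ∑ l, a i p * b k l * (star (u i l) * u p k).trace := by
  unfold tauNM inclA
  congr 1
  refine Finset.sum_congr rfl fun i _ => ?_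
  simp only [Matrix.mul_apply, Matrix.map_apply, Matrix.star_apply,
    Finset.sum_mul, Finset.mul_sum, Matrix.trace_sum,
    Algebra.algebraMap_eq_smul_one, smul_mul_assoc, mul_smul_comm, one_mul,
    mul_one, Matrix.trace_smul, smul_eq_mul]
  refine Finset.sum_congr rfl fun p _ => ?_
  rw [Finset.sum_comm]
  refine Finset.sum_congr rfl fun k _ => Finset.sum_congr rfl fun l _ => ?_
  rw [Matrix.trace_mul_comm]
  ring

lemma tau_conj {n m : ℕ} (u : Matrix (Fin n) (Fin n) (Matrix (Fin m) (Fin m) ℂ))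
    (hu : star u * u = 1) (x : Matrix (Fin n) (Fin n) (Matrix (Fin m) (Fin m) ℂ)) :
    tauNM n m (u * x * star u) = tauNM n m x := by
  rw [tau_mul_comm, ← mul_assoc, hu, one_mul]

/-- Identify `M_{nm}(ℂ)` with `M_n(ℂ) ⊗ M_m(ℂ)`, let `A = M_n(ℂ) ⊗ 1`,
let `u` be a unitary with blocks `u_{ij} ∈ M_m(ℂ)`, and `B = uAu*`. Then `A` and `B`
are mutually orthogonal with respect to `τ = Tr/(nm)` if and only if
`Tr(u_{ij}* u_{kl}) = δ_{ik} δ_{jl} (m/n)` for all `i,j,k,l`. -/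
theorem mutually_orthogonal_iff_block_traces
    {n m : ℕ}
    (u : Matrix (Fin n) (Fin n) (Matrix (Fin m) (Fin m) ℂ))
    (hu : star u * u = 1) (hu' : u * star u = 1) :
    (∀ a b : Matrix (Fin n) (Fin n) ℂ,
        tauNM n m (inclA n m a * (u * inclA n m b * star u)) =
          tauNM n m (inclA n m a) * tauNM n m (u * inclA n m b * star u)) ↔
      ∀ i j k l : Fin n,
        (star (u i j) * u k l).trace =
          if i = k ∧ j = l then (m : ℂ) / n else 0 := by
  have hconv : ∀ a b : Matrix (Fin n) (Fin n) ℂ,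
      (tauNM n m (inclA n m a * (u * inclA n m b * star u)) =
        tauNM n m (inclA n m a) * tauNM n m (u * inclA n m b * star u)) ↔
      (((n * m : ℕ) : ℂ)⁻¹ *
          ∑ i, ∑ p, ∑ k, ∑ l, a i p * b k l * (star (u i l) * u p k).trace =
        (((n * m : ℕ) : ℂ)⁻¹ * ((m : ℂ) * ∑ i, a i i)) *
          (((n * m : ℕ) : ℂ)⁻¹ * ((m : ℂ) * ∑ k, b k k))) := by
    intro a b
    rw [tau_key, tau_conj u hu, tau_inclA, tau_inclA]
  constructor
  · intro h i j k l
    rcases Nat.eq_zero_or_pos m with hm | hm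
    · subst hm
      simp [Matrix.trace]
    have hn : (n : ℂ) ≠ 0 := by
      have : 0 < n := i.pos
      exact_mod_cast this.ne'
    have hm' : (m : ℂ) ≠ 0 := by exact_mod_cast hm.ne'
    have key := (hconv (Matrix.single i k 1) (Matrix.single l j 1)).mp
      (h _ _)
    have hsum : (∑ i', ∑ p, ∑ k', ∑ l', Matrix.single i k 1 i' p *
        Matrix.single l j 1 k' l' * (star (u i' l') * u p k').trace) =
        (star (u i j) * u k l).trace := by
      simp [Matrix.single, ite_and, Finset.sum_ite_eq, Finset.sum_ite_eq']
    have h1 : (∑ i', Matrix.single i k (1:ℂ) i' i') =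
        if i = k then 1 else 0 := by
      simp [Matrix.single, ite_and, Finset.sum_ite_eq, eq_comm]
    have h2 : (∑ k', Matrix.single l j (1:ℂ) k' k') =
        if j = l then 1 else 0 := by
      simp [Matrix.single, ite_and, Finset.sum_ite_eq, eq_comm]
    rw [hsum, h1, h2] at key
    have hc : ((n * m : ℕ) : ℂ)⁻¹ ≠ 0 := by
      push_cast
      exact inv_ne_zero (mul_ne_zero hn hm')
    have key2 : (star (u i j) * u k l).trace =
        ((n * m : ℕ) : ℂ)⁻¹ * ((m : ℂ) * (if i = k then (1:ℂ) else 0)) *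
          ((m : ℂ) * (if j = l then (1:ℂ) else 0)) :=
      mul_left_cancel₀ hc (by rw [key]; ring)
    rw [key2]
    by_cases hik : i = k <;> by_cases hjl : j = l <;>
      simp only [hik, hjl, if_true, if_false, and_true, and_false, true_and,
        false_and, and_self, mul_one, mul_zero, zero_mul] <;>
      push_cast <;> field_simp <;> ring
  · intro h a b
    rw [hconv]
    simp only [h]
    rcases Nat.eq_zero_or_pos n with hn | hn
    · subst hn; simp
    rcases Nat.eq_zero_or_pos m with hm | hm
    · subst hm; simp
    have hn' : (n : ℂ) ≠ 0 := by exact_mod_cast hn.ne'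
    have hm' : (m : ℂ) ≠ 0 := by exact_mod_cast hm.ne'
    have hS : ∀ i p : Fin n, (∑ k, ∑ l, a i p * b k l *
        (if i = p ∧ l = k then (m : ℂ) / n else 0)) =
        if i = p then (∑ k, a i p * b k k * ((m : ℂ) / n)) else 0 := by
      intro i p
      by_cases hip : i = p
      · subst hip; simp
      · simp [hip]
    simp only [hS, Finset.sum_ite_eq, Finset.mem_univ, if_true]
    have : (∑ i, ∑ k, a i i * b k k * ((m : ℂ) / n)) =
        (∑ i, a i i) * (∑ k, b k k) * ((m : ℂ) / n) := by
      simp only [Finset.sum_mul, Finset.mul_sum]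
      rw [Finset.sum_comm]
    rw [this]
    push_cast
    field_simp
end
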